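/- Let $\alpha \in (0,1)$, $T > 0$, $\delta \ge 1$, and consider the graded mesh. For $2 \le n \le N$ and $1 \le j \le n-1$ define $w_{n,j} := \tau_n^{\alpha/2}\,\tau_{j+1}\,\tau_j^{-\alpha/2} + \tau_n^{\alpha}\,(k_{n,j+1} - k_{n,j})$. Then $w_{n,j} > 0$ for all such $n, j$, and there exists a constant $C > 0$, depending only on $\alpha$, $\delta$ and $T$, such that $\sum_{j=1}^{n-1} w_{n,j} \le C\,(1 + T)$ for every $N \ge 2$ and every $2 \le n \le N$. -/

import Mathlib

open Set

lemma gmw_rpow_le_one_add {x p : ℝ} (hx : 0 ≤ x) (hp0 : 0 ≤ p) (hp1 : p ≤ 1) :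
    x ^ p ≤ 1 + x := by
  rcases le_or_gt x 1 with h | h
  · calc x ^ p ≤ 1 := Real.rpow_le_one hx h hp0
    _ ≤ 1 + x := by linarith
  · calc x ^ p ≤ x ^ (1:ℝ) := Real.rpow_le_rpow_of_exponent_le h.le hp1
    _ = x := Real.rpow_one x
    _ ≤ 1 + x := by linarith

lemma gmw_slope_upper {δ x : ℝ} (hδ : 1 ≤ δ) (hx : 1 ≤ x) :
    (x+1)^δ - x^δ ≤ (2:ℝ)^δ * x^(δ-1) - x^(δ-1) := by
  have hx0 : (0:ℝ) < x := by linarith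
  have hmem : ∀ y : ℝ, 0 ≤ y → y ∈ Ici (0:ℝ) := fun y hy => hy
  have h := (convexOn_rpow hδ).secant_mono (a := x) (x := x+1) (y := 2*x)
    (hmem x hx0.le) (hmem (x+1) (by linarith)) (hmem (2*x) (by linarith))
    (by intro hc; linarith) (by intro hc; linarith) (by linarith)
  have hxx : x ^ (δ-1) * x = x ^ δ := by
    rw [Real.rpow_sub hx0, Real.rpow_one]; field_simp
  have h2 : ((2*x)^δ - x^δ) / (2*x - x) = 2^δ * x^(δ-1) - x^(δ-1) := by
    rw [Real.mul_rpow (by norm_num) hx0.le, show 2*x - x = x from by ring,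
      div_eq_iff hx0.ne']
    linear_combination (1 - (2:ℝ)^δ) * hxx
  have h1 : ((x+1)^δ - x^δ) / ((x+1) - x) = (x+1)^δ - x^δ := by
    simp
  rw [h1, h2] at h
  exact h

lemma gmw_slope_lower {δ x : ℝ} (hδ : 1 ≤ δ) (hx : 2 ≤ x) :
    x^(δ-1) ≤ x^δ - (x-1)^δ := by
  have hx0 : (0:ℝ) < x := by linarith
  have hmem : ∀ y : ℝ, 0 ≤ y → y ∈ Ici (0:ℝ) := fun y hy => hy
  have h := (convexOn_rpow hδ).secant_mono (a := x) (x := x/2) (y := x-1)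
    (hmem x hx0.le) (hmem (x/2) (by linarith)) (hmem (x-1) (by linarith))
    (by intro hc; linarith) (by intro hc; linarith) (by linarith)
  have h2 : ((x-1)^δ - x^δ) / ((x-1) - x) = x^δ - (x-1)^δ := by
    rw [show (x-1) - x = -1 from by ring]
    field_simp
    ring
  have hB : (2:ℝ) ≤ 2^δ := by
    calc (2:ℝ) = 2 ^ (1:ℝ) := (Real.rpow_one 2).symm
    _ ≤ 2 ^ δ := Real.rpow_le_rpow_of_exponent_le one_le_two hδ
  have hB0 : (0:ℝ) < 2^δ := by linarith
  have hxx : x ^ (δ-1) * x = x ^ δ := by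
    rw [Real.rpow_sub hx0, Real.rpow_one]; field_simp
  have hA : 0 ≤ x ^ δ := Real.rpow_nonneg hx0.le δ
  have h1 : x^(δ-1) ≤ ((x/2)^δ - x^δ) / (x/2 - x) := by
    rw [show x/2 - x = -(x/2) from by ring, div_neg, ← neg_div, neg_sub]
    rw [le_div_iff₀ (by linarith : (0:ℝ) < x/2)]
    rw [Real.div_rpow hx0.le (by norm_num : (0:ℝ) ≤ 2) δ]
    have key : x^δ / 2^δ ≤ x^δ / 2 := by
      apply div_le_div_of_nonneg_left hA (by norm_num) hB
    rw [show x^(δ-1)*(x/2) = (x^(δ-1)*x)/2 from by ring, hxx]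
    linarith
  rw [h2] at h
  linarith

lemma gmw_slope_upper2 {δ x : ℝ} (hδ : 1 ≤ δ) (hx : 2 ≤ x) :
    x^δ - (x-1)^δ ≤ ((2:ℝ)^δ - 1) * x^(δ-1) := by
  have hy0 : (0:ℝ) < x - 1 := by linarith
  have hmem : ∀ y : ℝ, 0 ≤ y → y ∈ Ici (0:ℝ) := fun y hy => hy
  have h := (convexOn_rpow hδ).secant_mono (a := x-1) (x := x) (y := 2*(x-1))
    (hmem (x-1) hy0.le) (hmem x (by linarith)) (hmem (2*(x-1)) (by linarith))
    (by intro hc; linarith) (by intro hc; linarith) (by linarith)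
  have hxx : (x-1) ^ (δ-1) * (x-1) = (x-1) ^ δ := by
    rw [Real.rpow_sub hy0, Real.rpow_one]; field_simp
  have h2 : ((2*(x-1))^δ - (x-1)^δ) / (2*(x-1) - (x-1)) = (2^δ - 1) * (x-1)^(δ-1) := by
    rw [Real.mul_rpow (by norm_num) hy0.le, show 2*(x-1) - (x-1) = x - 1 from by ring,
      div_eq_iff hy0.ne']
    linear_combination (1 - (2:ℝ)^δ) * hxx
  have h1 : (x^δ - (x-1)^δ) / (x - (x-1)) = x^δ - (x-1)^δ := by
    rw [show x - (x-1) = 1 from by ring, div_one]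
  rw [h1, h2] at h
  have hB : (2:ℝ) ≤ 2^δ := by
    calc (2:ℝ) = 2 ^ (1:ℝ) := (Real.rpow_one 2).symm
    _ ≤ 2 ^ δ := Real.rpow_le_rpow_of_exponent_le one_le_two hδ
  have hmono : (x-1)^(δ-1) ≤ x^(δ-1) :=
    Real.rpow_le_rpow hy0.le (by linarith) (by linarith)
  calc x^δ - (x-1)^δ ≤ (2^δ - 1) * (x-1)^(δ-1) := h
  _ ≤ (2^δ - 1) * x^(δ-1) := by
      apply mul_le_mul_of_nonneg_left hmono (by linarith)

lemma gmw_telescope (F : ℕ → ℝ) (m : ℕ) :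
    ∑ j ∈ Finset.Icc 1 m, (F (j+1) - F j) = F (m+1) - F 1 := by
  induction m with
  | zero => simp
  | succ p ih =>
    rw [Finset.sum_Icc_succ_top (by omega : 1 ≤ p + 1), ih]
    ring

lemma gmw_integral {α : ℝ} (h1 : α < 1) (a b c : ℝ) :
    ∫ s in a..b, (c - s) ^ (-α) = ((c-a)^(1-α) - (c-b)^(1-α))/(1-α) := by
  rw [intervalIntegral.integral_comp_sub_left (fun u => u ^ (-α)) c,
    integral_rpow (Or.inl (by linarith))]
  ring_nf

set_option maxHeartbeats 2000000 in
/-- Let `α ∈ (0,1)`, `T > 0`, `δ ≥ 1`, and consider the graded mesh. For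
`2 ≤ n ≤ N` and `1 ≤ j ≤ n-1` define
`w n j = τ n ^ (α/2) * τ (j+1) * (τ j) ^ (-(α/2)) + τ n ^ α * (k n (j+1) - k n j)`.
Then `w n j > 0` and there is a constant `C > 0`, depending only on `α`, `δ`, `T`,
with `∑_{j=1}^{n-1} w n j ≤ C * (1 + T)` for every `N ≥ 2` and `2 ≤ n ≤ N`. -/
theorem graded_mesh_weights_pos_and_sum_bound
    (α T δ : ℝ) (hα : α ∈ Set.Ioo (0 : ℝ) 1) (hT : 0 < T) (hδ : 1 ≤ δ) :
    ∃ C : ℝ, 0 < C ∧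
      ∀ (N : ℕ), 2 ≤ N →
        ∀ (t τ : ℕ → ℝ), (∀ m, t m = T * ((m : ℝ) / (N : ℝ)) ^ δ) →
          (∀ m, 1 ≤ m → τ m = t m - t (m - 1)) →
          ∀ (k : ℕ → ℕ → ℝ),
            (∀ n j, 1 ≤ j → j ≤ n →
              k n j = (τ j)⁻¹ / Real.Gamma (1 - α) *
                ∫ s in (t (j - 1))..(t j), (t n - s) ^ (-α)) →
            ∀ (w : ℕ → ℕ → ℝ),
              (∀ n j, 1 ≤ j → j ≤ n - 1 →
                w n j = τ n ^ (α / 2) * τ (j + 1) * (τ j) ^ (-(α / 2)) +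
                  τ n ^ α * (k n (j + 1) - k n j)) →
              ∀ n, 2 ≤ n → n ≤ N →
                (∀ j, 1 ≤ j → j ≤ n - 1 → 0 < w n j) ∧
                  ∑ j ∈ Finset.Icc 1 (n - 1), w n j ≤ C * (1 + T) := by
  obtain ⟨hα0, hα1⟩ := hα
  have hΓpos : 0 < Real.Gamma (1 - α) := Real.Gamma_pos_of_pos (by linarith)
  obtain ⟨G, hGdef⟩ : ∃ G : ℝ, G = (1 - α) * Real.Gamma (1 - α) := ⟨_, rfl⟩
  have hGpos : 0 < G := hGdef ▸ mul_pos (by linarith) hΓpos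
  obtain ⟨B, hBdef⟩ : ∃ B : ℝ, B = (2:ℝ) ^ δ - 1 := ⟨_, rfl⟩
  have h2δ : (2:ℝ) ≤ 2 ^ δ := by
    calc (2:ℝ) = 2 ^ (1:ℝ) := (Real.rpow_one 2).symm
    _ ≤ 2 ^ δ := Real.rpow_le_rpow_of_exponent_le one_le_two hδ
  have hB1 : (1:ℝ) ≤ B := by rw [hBdef]; linarith
  have hB0 : (0:ℝ) ≤ B := by linarith
  refine ⟨1 + B^2 + 1/G, by nlinarith [one_div_pos.mpr hGpos], ?_⟩
  intro N hN t τ ht hτ k hk w hw n hn2 hnN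
  have hN0 : (0:ℝ) < N := by exact_mod_cast (by omega : 0 < N)
  have hδ0 : (0:ℝ) < δ := by linarith
  have tmono : ∀ {a b : ℕ}, a ≤ b → t a ≤ t b := by
    intro a b hab
    rw [ht, ht]
    refine mul_le_mul_of_nonneg_left ?_ hT.le
    exact Real.rpow_le_rpow (by positivity)
      ((div_le_div_iff_of_pos_right hN0).mpr (by exact_mod_cast hab)) hδ0.le
  have tstrict : ∀ {a b : ℕ}, a < b → t a < t b := by
    intro a b hab
    rw [ht, ht]
    refine mul_lt_mul_of_pos_left ?_ hT
    exact Real.rpow_lt_rpow (by positivity)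
      ((div_lt_div_iff_of_pos_right hN0).mpr (by exact_mod_cast hab)) hδ0
  have τpos : ∀ m : ℕ, 1 ≤ m → 0 < τ m := by
    intro m hm
    rw [hτ m hm]
    have := tstrict (show m - 1 < m by omega)
    linarith
  have tnonneg : ∀ m : ℕ, 0 ≤ t m := by
    intro m; rw [ht]; positivity
  have tle : ∀ m : ℕ, m ≤ N → t m ≤ T := by
    intro m hm
    rw [ht]
    calc T * ((m:ℝ)/N) ^ δ ≤ T * 1 := by
          refine mul_le_mul_of_nonneg_left ?_ hT.le
          exact Real.rpow_le_one (by positivity)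
            ((div_le_one hN0).mpr (by exact_mod_cast hm)) hδ0.le
      _ = T := mul_one T
  -- closed form for k
  have kform : ∀ n' j : ℕ, 1 ≤ j → j ≤ n' →
      k n' j = (((t n' - t (j-1)) ^ (1-α) - (t n' - t j) ^ (1-α)) / τ j) / G := by
    intro n' j h1 h2
    rw [hk n' j h1 h2, gmw_integral hα1, hGdef]
    have hτj : τ j ≠ 0 := (τpos j h1).ne'
    have hΓ : Real.Gamma (1-α) ≠ 0 := hΓpos.ne'
    have h1α : (1:ℝ) - α ≠ 0 := by linarith
    field_simp
  -- monotonicity of k in j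
  have kmono : ∀ j : ℕ, 1 ≤ j → j + 1 ≤ n → k n j ≤ k n (j+1) := by
    intro j hj hjn
    have p0 : (0:ℝ) < 1 - α := by linarith
    have p1 : 1 - α < 1 := by linarith
    have hconv := ((Real.strictConcaveOn_rpow p0 p1).concaveOn).neg
    set a := t n - t (j+1) with hadef
    set b := t n - t j with hbdef
    set c := t n - t (j-1) with hcdef
    have ha0 : (0:ℝ) ≤ a := sub_nonneg.mpr (tmono hjn)
    have hab : a < b := by
      have := tstrict (show j < j + 1 by omega)
      rw [hadef, hbdef]; linarith
    have hbc : b < c := by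
      have := tstrict (show j - 1 < j by omega)
      rw [hbdef, hcdef]; linarith
    have hb0 : (0:ℝ) ≤ b := by linarith
    have hc0 : (0:ℝ) ≤ c := by linarith
    have h := hconv.secant_mono (a := b) (x := a) (y := c)
      (Set.mem_Ici.mpr hb0) (Set.mem_Ici.mpr ha0) (Set.mem_Ici.mpr hc0)
      (ne_of_lt hab) (ne_of_gt hbc) (le_of_lt (hab.trans hbc))
    simp only [Pi.neg_apply] at h
    have hab' : a - b ≠ 0 := by linarith
    have hba' : b - a ≠ 0 := by linarith
    have hcb' : c - b ≠ 0 := by linarith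
    have e1 : (-(a ^ (1-α)) - -(b ^ (1-α)))/(a - b) = (b ^ (1-α) - a ^ (1-α))/(a - b) := by
      congr 1; ring
    have e2 : (-(c ^ (1-α)) - -(b ^ (1-α)))/(c - b) = -((c ^ (1-α) - b ^ (1-α))/(c - b)) := by
      field_simp
      ring
    have e3 : (b ^ (1-α) - a ^ (1-α))/(a - b) = -((b ^ (1-α) - a ^ (1-α))/(b - a)) := by
      field_simp
      ring
    rw [e1, e3, e2] at h
    have key : (c ^ (1-α) - b ^ (1-α))/(c - b) ≤ (b ^ (1-α) - a ^ (1-α))/(b - a) := by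
      linarith
    rw [kform n j hj (by omega), kform n (j+1) (by omega) hjn,
      hτ j hj, hτ (j+1) (by omega)]
    simp only [Nat.add_sub_cancel]
    have ecb : t j - t (j-1) = c - b := by rw [hbdef, hcdef]; ring
    have eba : t (j+1) - t j = b - a := by rw [hadef, hbdef]; ring
    rw [ecb, eba]
    exact (div_le_div_iff_of_pos_right hGpos).mpr key
  -- value of the diagonal term
  have knn : τ n ^ α * k n n = 1/G := by
    have hτn : 0 < τ n := τpos n (by omega)
    rw [kform n n (by omega) le_rfl]
    rw [show t n - t n = 0 from sub_self _, Real.zero_rpow (show (1:ℝ) - α ≠ 0 by linarith)]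
    rw [← hτ n (by omega)]
    have hpow : τ n ^ α * τ n ^ (1-α) = τ n := by
      rw [← Real.rpow_add hτn, show α + (1-α) = 1 from by ring, Real.rpow_one]
    rw [sub_zero]
    calc τ n ^ α * (τ n ^ (1-α) / τ n / G) = (τ n ^ α * τ n ^ (1-α)) / (τ n * G) := by
          ring
      _ = τ n / (τ n * G) := by rw [hpow]
      _ = 1/G := by
          rw [eq_div_iff hGpos.ne']
          field_simp
  have kn1 : 0 ≤ k n 1 := by
    rw [kform n 1 le_rfl (by omega)]
    have hnum : 0 ≤ (t n - t (1-1)) ^ (1-α) - (t n - t 1) ^ (1-α) := by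
      refine sub_nonneg.mpr (Real.rpow_le_rpow ?_ ?_ (by linarith))
      · have := tmono (show 1 ≤ n by omega); linarith
      · have := tmono (show 1 - 1 ≤ 1 by omega); linarith
    exact div_nonneg (div_nonneg hnum (τpos 1 le_rfl).le) hGpos.le
  -- explicit mesh step formula
  have hNδ : (0:ℝ) < (N:ℝ) ^ δ := Real.rpow_pos_of_pos hN0 δ
  have hτeq : ∀ m : ℕ, 1 ≤ m →
      τ m = T/(N:ℝ)^δ * (((m:ℝ))^δ - ((m:ℝ)-1)^δ) := by
    intro m hm
    have hm1 : (1:ℝ) ≤ (m:ℝ) := by exact_mod_cast hm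
    rw [hτ m hm, ht, ht, Nat.cast_sub hm]
    rw [Real.div_rpow (by positivity) hN0.le δ,
      Real.div_rpow (by push_cast; linarith : (0:ℝ) ≤ (m:ℝ) - ((1:ℕ):ℝ)) hN0.le δ]
    push_cast
    field_simp
  -- step ratio bound
  have hratio : ∀ j : ℕ, 1 ≤ j → τ (j+1) ≤ B * τ j := by
    intro j hj
    rw [hτeq (j+1) (by omega), hτeq j hj]
    push_cast
    rw [show (j:ℝ) + 1 - 1 = (j:ℝ) from by ring]
    rcases eq_or_lt_of_le hj with h1 | h2
    · have : (j:ℝ) = 1 := by exact_mod_cast h1.symm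
      rw [this]
      rw [show (1:ℝ) + 1 = 2 from by norm_num, Real.one_rpow,
        show (1:ℝ) - 1 = 0 from by ring, Real.zero_rpow (by linarith : δ ≠ 0), hBdef]
      have hTN : 0 ≤ T/(N:ℝ)^δ := by positivity
      nlinarith
    · have hx2 : (2:ℝ) ≤ (j:ℝ) := by exact_mod_cast h2
      have hx1 : (1:ℝ) ≤ (j:ℝ) := by linarith
      have u := gmw_slope_upper hδ hx1
      have l := gmw_slope_lower hδ hx2
      have big : ((j:ℝ)+1)^δ - (j:ℝ)^δ ≤ B * ((j:ℝ)^δ - ((j:ℝ)-1)^δ) := by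
        have := mul_le_mul_of_nonneg_left l hB0
        rw [hBdef] at *
        nlinarith
      have hTN : 0 ≤ T/(N:ℝ)^δ := by positivity
      calc T/(N:ℝ)^δ * (((j:ℝ)+1)^δ - (j:ℝ)^δ)
          ≤ T/(N:ℝ)^δ * (B * ((j:ℝ)^δ - ((j:ℝ)-1)^δ)) := mul_le_mul_of_nonneg_left big hTN
        _ = B * (T/(N:ℝ)^δ * ((j:ℝ)^δ - ((j:ℝ)-1)^δ)) := by ring
  -- n * τ n bound
  have hntau : (n:ℝ) * τ n ≤ B * T := by
    rw [hτeq n (by omega)]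
    have hx2 : (2:ℝ) ≤ (n:ℝ) := by exact_mod_cast hn2
    have hx0 : (0:ℝ) < (n:ℝ) := by linarith
    have u2 := gmw_slope_upper2 hδ hx2
    have hxx : (n:ℝ) ^ (δ-1) * (n:ℝ) = (n:ℝ) ^ δ := by
      rw [Real.rpow_sub hx0, Real.rpow_one]; field_simp
    have hxN : (n:ℝ) ^ δ ≤ (N:ℝ) ^ δ :=
      Real.rpow_le_rpow hx0.le (by exact_mod_cast hnN) hδ0.le
    have hTN : 0 ≤ T/(N:ℝ)^δ := by positivity
    calc (n:ℝ) * (T/(N:ℝ)^δ * ((n:ℝ)^δ - ((n:ℝ)-1)^δ))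
        = T/(N:ℝ)^δ * ((n:ℝ) * ((n:ℝ)^δ - ((n:ℝ)-1)^δ)) := by ring
      _ ≤ T/(N:ℝ)^δ * (B * (N:ℝ)^δ) := by
          refine mul_le_mul_of_nonneg_left ?_ hTN
          calc (n:ℝ) * ((n:ℝ)^δ - ((n:ℝ)-1)^δ)
              ≤ (n:ℝ) * (B * (n:ℝ)^(δ-1)) := by
                refine mul_le_mul_of_nonneg_left ?_ hx0.le
                rw [hBdef]; exact u2
            _ = B * ((n:ℝ)^(δ-1) * (n:ℝ)) := by ring
            _ = B * (n:ℝ)^δ := by rw [hxx]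
            _ ≤ B * (N:ℝ)^δ := mul_le_mul_of_nonneg_left hxN hB0
      _ = B * T := by field_simp
  constructor
  · -- positivity of w
    intro j hj hjn1
    rw [hw n j hj hjn1]
    have hτn := τpos n (by omega)
    have hτj := τpos j hj
    have hτj1 := τpos (j+1) (by omega)
    have h1 : 0 < τ n ^ (α/2) * τ (j+1) * (τ j) ^ (-(α/2)) :=
      mul_pos (mul_pos (Real.rpow_pos_of_pos hτn _) hτj1) (Real.rpow_pos_of_pos hτj _)
    have h2 : 0 ≤ τ n ^ α * (k n (j+1) - k n j) :=
      mul_nonneg (Real.rpow_nonneg hτn.le α)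
        (sub_nonneg.mpr (kmono j hj (by omega)))
    linarith
  · -- sum bound
    have hsplit : ∑ j ∈ Finset.Icc 1 (n-1), w n j =
        (∑ j ∈ Finset.Icc 1 (n-1), τ n ^ (α/2) * τ (j+1) * (τ j) ^ (-(α/2))) +
          τ n ^ α * ∑ j ∈ Finset.Icc 1 (n-1), (k n (j+1) - k n j) := by
      rw [Finset.mul_sum, ← Finset.sum_add_distrib]
      refine Finset.sum_congr rfl ?_
      intro j hj
      rw [Finset.mem_Icc] at hj
      rw [hw n j hj.1 hj.2]
    have htel : ∑ j ∈ Finset.Icc 1 (n-1), (k n (j+1) - k n j) = k n n - k n 1 := by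
      have h := gmw_telescope (k n) (n-1)
      rwa [show n - 1 + 1 = n from by omega] at h
    have hτn := τpos n (by omega)
    have hS2 : τ n ^ α * (k n n - k n 1) ≤ 1/G := by
      have h1 : 0 ≤ τ n ^ α * k n 1 :=
        mul_nonneg (Real.rpow_nonneg hτn.le α) kn1
      have h2 := knn
      nlinarith [h1, h2]
    have hS1 : ∑ j ∈ Finset.Icc 1 (n-1), τ n ^ (α/2) * τ (j+1) * (τ j) ^ (-(α/2))
        ≤ T + B^2 * T := by
      have hterm : ∀ j ∈ Finset.Icc 1 (n-1),
          τ n ^ (α/2) * τ (j+1) * (τ j) ^ (-(α/2)) ≤ τ (j+1) + B * τ n := by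
        intro j hj
        rw [Finset.mem_Icc] at hj
        obtain ⟨hj1, hj2⟩ := hj
        have hτj := τpos j hj1
        have hτj1 := τpos (j+1) (by omega)
        have e1 : τ n ^ (α/2) * τ (j+1) * (τ j) ^ (-(α/2)) =
            (τ n / τ j) ^ (α/2) * τ (j+1) := by
          rw [Real.div_rpow hτn.le hτj.le, Real.rpow_neg hτj.le]
          ring
        rw [e1]
        have h2 : (τ n / τ j) ^ (α/2) ≤ 1 + τ n / τ j :=
          gmw_rpow_le_one_add (div_nonneg hτn.le hτj.le) (by linarith) (by linarith)
        calc (τ n / τ j) ^ (α/2) * τ (j+1) ≤ (1 + τ n / τ j) * τ (j+1) :=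
              mul_le_mul_of_nonneg_right h2 hτj1.le
          _ = τ (j+1) + τ n * (τ (j+1) / τ j) := by ring
          _ ≤ τ (j+1) + B * τ n := by
              have hr : τ (j+1) / τ j ≤ B := by
                rw [div_le_iff₀ hτj]
                have := hratio j hj1
                linarith
              nlinarith [mul_le_mul_of_nonneg_left hr hτn.le]
      calc ∑ j ∈ Finset.Icc 1 (n-1), τ n ^ (α/2) * τ (j+1) * (τ j) ^ (-(α/2))
          ≤ ∑ j ∈ Finset.Icc 1 (n-1), (τ (j+1) + B * τ n) := Finset.sum_le_sum hterm
        _ = (∑ j ∈ Finset.Icc 1 (n-1), τ (j+1)) + ((n-1:ℕ):ℝ) * (B * τ n) := by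
            rw [Finset.sum_add_distrib, Finset.sum_const, Nat.card_Icc]
            simp [nsmul_eq_mul]
        _ ≤ T + B^2 * T := by
            have hA : ∑ j ∈ Finset.Icc 1 (n-1), τ (j+1) = t n - t 1 := by
              have hc : ∀ j ∈ Finset.Icc 1 (n-1), τ (j+1) = t (j+1) - t j := by
                intro j hj
                rw [hτ (j+1) (by omega)]
                simp only [Nat.add_sub_cancel]
              rw [Finset.sum_congr rfl hc, gmw_telescope t (n-1),
                show n - 1 + 1 = n from by omega]
            have h1 : t n - t 1 ≤ T := by
              have := tle n hnN
              have := tnonneg 1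
              linarith
            have hc2 : ((n-1:ℕ):ℝ) ≤ (n:ℝ) := by exact_mod_cast Nat.sub_le n 1
            have h2 : ((n-1:ℕ):ℝ) * (B * τ n) ≤ B^2 * T := by
              calc ((n-1:ℕ):ℝ) * (B * τ n) = B * (((n-1:ℕ):ℝ) * τ n) := by ring
                _ ≤ B * ((n:ℝ) * τ n) :=
                    mul_le_mul_of_nonneg_left (mul_le_mul_of_nonneg_right hc2 hτn.le) hB0
                _ ≤ B * (B * T) := mul_le_mul_of_nonneg_left hntau hB0
                _ = B^2 * T := by ring
            linarith
    rw [hsplit, htel]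
    have hfin : (0:ℝ) ≤ (1/G) * T := mul_nonneg (one_div_pos.mpr hGpos).le hT.le
    nlinarith [hS1, hS2, hfin, sq_nonneg B]
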